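/- Let F ⊆ P([n]) be union closed with ∅ ∈ F and let T(F) = τ⁻¹({F}) be the fibers of the associated interior operator τ. Then F can be enumerated F = {F₁, ..., F_m} so that (i) |T(F₁)| ≤ |T(F₂)| ≤ ... ≤ |T(F_m)| and (ii) whenever F_i ⊇ F_j we have i ≤ j. -/

import Mathlib

theorem stmt_10 (n : ℕ) (ℱ : Finset (Finset (Fin n)))
    (hEmpty : ∅ ∈ ℱ) (hUC : ∀ A ∈ ℱ, ∀ B ∈ ℱ, A ∪ B ∈ ℱ)
    (τ : Finset (Fin n) → Finset (Fin n))
    (hτ : ∀ X, τ X = (ℱ.filter (fun G => G ⊆ X)).sup id) :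
    ∃ e : Fin ℱ.card → Finset (Fin n),
      Function.Injective e ∧ (∀ i, e i ∈ ℱ) ∧ (∀ F ∈ ℱ, ∃ i, e i = F) ∧
      (∀ i j : Fin ℱ.card, i ≤ j →
        (Finset.univ.filter (fun X : Finset (Fin n) => τ X = e i)).card
          ≤ (Finset.univ.filter (fun X : Finset (Fin n) => τ X = e j)).card) ∧
      (∀ i j : Fin ℱ.card, e j ⊆ e i → i ≤ j) := by
  classical
  set fib : Finset (Fin n) → ℕ :=
    fun F => (Finset.univ.filter (fun X : Finset (Fin n) => τ X = F)).card with hfib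
  have hτsub : ∀ X : Finset (Fin n), τ X ⊆ X := by
    intro X
    rw [hτ, ← Finset.le_iff_subset]
    exact Finset.sup_le fun H hH => Finset.le_iff_subset.mpr (Finset.mem_filter.mp hH).2
  -- main monotonicity lemma
  have main : ∀ F, ∀ G ∈ ℱ, G ⊆ F → fib F ≤ fib G := by
    intro F G hG hGF
    apply Finset.card_le_card_of_injOn (fun X => G ∪ (X \ F))
    · intro X hX
      simp only [Finset.mem_coe, Finset.mem_filter, Finset.mem_univ, true_and] at hX ⊢
      have hFX : F ⊆ X := hX ▸ hτsub X
      have hsub : G ∪ (X \ F) ⊆ X :=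
        Finset.union_subset (hGF.trans hFX) Finset.sdiff_subset
      rw [hτ]
      apply Finset.Subset.antisymm
      · rw [← Finset.le_iff_subset]
        apply Finset.sup_le
        intro H hH
        rw [Finset.le_iff_subset]
        rw [Finset.mem_filter] at hH
        have hHX : H ⊆ X := hH.2.trans hsub
        have hHF : H ⊆ F := by
          have h5 : H ≤ (ℱ.filter (fun G => G ⊆ X)).sup id :=
            Finset.le_sup (f := id) (Finset.mem_filter.mpr ⟨hH.1, hHX⟩)
          rw [← hτ, Finset.le_iff_subset, hX] at h5
          exact h5
        intro a ha
        rcases Finset.mem_union.mp (hH.2 ha) with h | h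
        · exact h
        · exact absurd (hHF ha) (Finset.mem_sdiff.mp h).2
      · exact Finset.le_iff_subset.mp (Finset.le_sup (f := id)
          (Finset.mem_filter.mpr ⟨hG, Finset.subset_union_left⟩))
    · intro X₁ h₁ X₂ h₂ heq
      simp only [Finset.coe_filter, Set.mem_setOf_eq, Finset.mem_univ, true_and] at h₁ h₂
      have hF₁ : F ⊆ X₁ := h₁ ▸ hτsub X₁
      have hF₂ : F ⊆ X₂ := h₂ ▸ hτsub X₂
      have key : ∀ X : Finset (Fin n), F ⊆ X → F ∪ ((G ∪ (X \ F)) \ G) = X := by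
        intro X hFX
        ext a
        simp only [Finset.mem_union, Finset.mem_sdiff]
        constructor
        · rintro (h | ⟨(h | ⟨h1, h2⟩), hg⟩)
          · exact hFX h
          · exact absurd h hg
          · exact h1
        · intro ha
          by_cases h : a ∈ F
          · exact Or.inl h
          · by_cases hg : a ∈ G
            · exact absurd (hGF hg) h
            · exact Or.inr ⟨Or.inr ⟨ha, h⟩, hg⟩
      have heq' : G ∪ (X₁ \ F) = G ∪ (X₂ \ F) := heq
      calc X₁ = F ∪ ((G ∪ (X₁ \ F)) \ G) := (key X₁ hF₁).symm
        _ = F ∪ ((G ∪ (X₂ \ F)) \ G) := by rw [heq']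
        _ = X₂ := key X₂ hF₂
  -- lexicographic decoding lemma
  have lem : ∀ (f g : Finset (Fin n) → ℕ) (K : ℕ), (∀ F, g F < K) →
      ∀ a b, f a * K + g a ≤ f b * K + g b → f a ≤ f b := by
    intro f g K hK a b h
    by_contra hc
    push_neg at hc
    have h1 : f b * K + g b < f b * K + K := Nat.add_lt_add_left (hK b) _
    have h2 : f b * K + K = (f b + 1) * K := by ring
    have h3 : (f b + 1) * K ≤ f a * K := Nat.mul_le_mul_right K hc
    omega
  -- keys
  let N := Fintype.card (Finset (Fin n))
  let idx : Finset (Fin n) → ℕ := fun F => ((Fintype.equivFin (Finset (Fin n))) F).val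
  have hidxlt : ∀ F, idx F < N := fun F => ((Fintype.equivFin (Finset (Fin n))) F).isLt
  have hidxinj : Function.Injective idx := fun a b h =>
    (Fintype.equivFin (Finset (Fin n))).injective (Fin.ext h)
  let key : Finset (Fin n) → ℕ := fun F => fib F * (n + 1) + (n - F.card)
  let key' : Finset (Fin n) → ℕ := fun F => key F * N + idx F
  have hcard_le : ∀ F : Finset (Fin n), F.card ≤ n := by
    intro F
    simpa using Finset.card_le_card (Finset.subset_univ F)
  have hsublt : ∀ F : Finset (Fin n), n - F.card < n + 1 := by
    intro F; omega
  have key_of_key' : ∀ a b, key' a ≤ key' b → key a ≤ key b :=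
    lem key idx N hidxlt
  have fib_of_key : ∀ a b, key a ≤ key b → fib a ≤ fib b :=
    lem fib (fun F => n - F.card) (n + 1) hsublt
  -- strict key inequality for strict supersets
  have key_strict : ∀ F, ∀ G ∈ ℱ, G ⊂ F → key F < key G := by
    intro F G hG hGF
    have h1 : fib F ≤ fib G := main F G hG hGF.subset
    have h2 : G.card < F.card := Finset.card_lt_card hGF
    have h3 : F.card ≤ n := hcard_le F
    have h4 : n - F.card < n - G.card := by omega
    calc key F = fib F * (n + 1) + (n - F.card) := rfl
      _ < fib G * (n + 1) + (n - G.card) :=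
        Nat.add_lt_add_of_le_of_lt (Nat.mul_le_mul_right _ h1) h4
      _ = key G := rfl
  -- the order
  let r : Finset (Fin n) → Finset (Fin n) → Prop := fun a b => key' a ≤ key' b
  haveI : DecidableRel r := fun a b => inferInstanceAs (Decidable (key' a ≤ key' b))
  haveI : IsTrans (Finset (Fin n)) r := ⟨fun _ _ _ h1 h2 => le_trans h1 h2⟩
  haveI : IsTotal (Finset (Fin n)) r := ⟨fun a b => le_total (key' a) (key' b)⟩
  haveI : IsAntisymm (Finset (Fin n)) r := by
    constructor
    intro a b h1 h2
    have heq : key' a = key' b := le_antisymm h1 h2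
    have hmod : ∀ c, key' c % N = idx c := by
      intro c
      show (key c * N + idx c) % N = idx c
      rw [Nat.mul_comm (key c) N, Nat.mul_add_mod]
      exact Nat.mod_eq_of_lt (hidxlt c)
    exact hidxinj (by rw [← hmod a, ← hmod b, heq])
  -- sorted enumeration
  let l := ℱ.sort r
  have hlen : ℱ.card = l.length := (Finset.length_sort r).symm
  have hnodup : l.Nodup := Finset.sort_nodup ℱ r
  have hsorted : l.Pairwise r := Finset.pairwise_sort ℱ r
  have hmem : ∀ a, a ∈ l ↔ a ∈ ℱ := fun a => Finset.mem_sort r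
  have geti_inj := List.nodup_iff_injective_get.mp hnodup
  refine ⟨fun i => l.get (Fin.cast hlen i), ?_, ?_, ?_, ?_, ?_⟩
  · intro i j h
    exact Fin.cast_injective hlen (geti_inj h)
  · intro i
    exact (hmem _).mp (l.get_mem _)
  · intro F hF
    obtain ⟨k, hk⟩ := List.mem_iff_get.mp ((hmem F).mpr hF)
    exact ⟨Fin.cast hlen.symm k, by simpa using hk⟩
  · intro i j hij
    rcases eq_or_lt_of_le hij with h | h
    · subst h; exact le_refl _
    · have hr : r (l.get (Fin.cast hlen i)) (l.get (Fin.cast hlen j)) :=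
        hsorted.rel_get_of_lt (by simpa using h)
      exact fib_of_key _ _ (key_of_key' _ _ hr)
  · intro i j hsub
    have hsub' : l.get (Fin.cast hlen j) ⊆ l.get (Fin.cast hlen i) := hsub
    by_contra hc
    push_neg at hc
    have hr : r (l.get (Fin.cast hlen j)) (l.get (Fin.cast hlen i)) :=
      hsorted.rel_get_of_lt (by simpa using hc)
    have hkey : key (l.get (Fin.cast hlen j)) ≤ key (l.get (Fin.cast hlen i)) :=
      key_of_key' _ _ hr
    rcases eq_or_lt_of_le (Finset.le_iff_subset.mpr hsub') with heq | hlt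
    · have hij : i = j := Fin.cast_injective hlen (geti_inj heq.symm)
      omega
    · have hjmem : l.get (Fin.cast hlen j) ∈ ℱ := (hmem _).mp (l.get_mem _)
      have hks := key_strict (l.get (Fin.cast hlen i)) (l.get (Fin.cast hlen j)) hjmem hlt
      omega
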